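/- Let n ≥ 4k³ and let 𝓕 ⊆ ([n] choose k) be a family such that |A∩B| + |B∩C| + |C∩A| ≥ 2 for all A, B, C ∈ 𝓕. Then |𝓕| ≤ C(n−1, k−1). -/

import Mathlib

open Finset

-- count of k-subsets of s containing a fixed P ⊆ s
lemma count_supersets {α : Type*} [DecidableEq α] (s P : Finset α) (k : ℕ)
    (hPs : P ⊆ s) (hPk : P.card ≤ k) :
    (((s.powersetCard k).filter (fun C => P ⊆ C)).card)
      = (s.card - P.card).choose (k - P.card) := by
  rw [← Finset.card_sdiff_of_subset hPs, ← card_powersetCard]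
  apply Finset.card_bij (fun C _ => C \ P)
  · intro C hC
    simp only [mem_filter, mem_powersetCard] at hC
    obtain ⟨⟨hCs, hCk⟩, hPC⟩ := hC
    rw [mem_powersetCard]
    exact ⟨sdiff_subset_sdiff hCs Subset.rfl, by rw [Finset.card_sdiff_of_subset hPC, hCk]⟩
  · intro C hC D hD h
    simp only [mem_filter, mem_powersetCard] at hC hD
    rw [← Finset.sdiff_union_of_subset hC.2, ← Finset.sdiff_union_of_subset hD.2, h]
  · intro D hD
    rw [mem_powersetCard] at hD
    refine ⟨D ∪ P, ?_, ?_⟩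
    · simp only [mem_filter, mem_powersetCard]
      have hdisj : Disjoint D P := (Finset.sdiff_disjoint.mono_left hD.1)
      refine ⟨⟨Finset.union_subset (hD.1.trans Finset.sdiff_subset) hPs, ?_⟩,
        Finset.subset_union_right⟩
      rw [Finset.card_union_of_disjoint hdisj, hD.2]
      omega
    · exact Finset.union_sdiff_cancel_right (Finset.sdiff_disjoint.mono_left hD.1)


/-- `d A B C = |A∩B| + |B∩C| + |C∩A|`. -/
def dd (A B C : Finset ℕ) : ℕ := (A ∩ B).card + (B ∩ C).card + (C ∩ A).card

theorem stmt9 (n k : ℕ) (hn : 4 * k ^ 3 ≤ n)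
    (𝓕 : Finset (Finset ℕ)) (h𝓕 : 𝓕 ⊆ (Finset.Icc 1 n).powersetCard k)
    (hd : ∀ A ∈ 𝓕, ∀ B ∈ 𝓕, ∀ C ∈ 𝓕, 2 ≤ dd A B C) :
    𝓕.card ≤ (n - 1).choose (k - 1) := by
  classical
  have hsub : ∀ A ∈ 𝓕, A ⊆ Finset.Icc 1 n ∧ A.card = k := by
    intro A hA
    exact Finset.mem_powersetCard.1 (h𝓕 hA)
  have hkk : k ≤ k ^ 3 := Nat.le_self_pow (by norm_num) k
  rcases Nat.eq_zero_or_pos k with hk0 | hk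
  · -- k = 0 : family must be empty
    have h0 : 𝓕 = ∅ := by
      by_contra h
      obtain ⟨A, hA⟩ := Finset.nonempty_iff_ne_empty.2 h
      have h2 := hd A hA A hA A hA
      have hAe : A = ∅ := Finset.card_eq_zero.1 (by rw [(hsub A hA).2, hk0])
      simp [dd, hAe] at h2
    simp [h0]
  by_cases hint : ∀ A ∈ 𝓕, ∀ B ∈ 𝓕, (A ∩ B).Nonempty
  · -- intersecting case: transport to Fin n and apply Erdős–Ko–Rado
    have hn0 : 0 < n := by linarith
    set f : ℕ → Fin n := fun x => ⟨(x - 1) % n, Nat.mod_lt _ hn0⟩ with hf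
    have hgf : ∀ x ∈ Finset.Icc 1 n, ((f x : ℕ) + 1) = x := by
      intro x hx
      rw [Finset.mem_Icc] at hx
      simp only [hf]
      have : x - 1 < n := by omega
      rw [Nat.mod_eq_of_lt this]
      omega
    have hinj : ∀ A ⊆ Finset.Icc 1 n, ∀ B ⊆ Finset.Icc 1 n,
        A.image f = B.image f → A = B := by
      intro A hA B hB h
      have key : ∀ (C : Finset ℕ), C ⊆ Finset.Icc 1 n →
          (C.image f).image (fun y : Fin n => (y : ℕ) + 1) = C := by
        intro C hC
        rw [Finset.image_image]
        nth_rewrite 2 [← Finset.image_id (s := C)]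
        exact Finset.image_congr (fun x hx => hgf x (hC hx))
      rw [← key A hA, ← key B hB, h]
    set 𝒜 : Finset (Finset (Fin n)) := 𝓕.image (fun F => F.image f) with h𝒜
    have hinjF : ∀ F ⊆ Finset.Icc 1 n, Set.InjOn f F := by
      intro F hF x hx y hy hxy
      have h1 := hgf x (hF hx)
      have h2 := hgf y (hF hy)
      rw [hxy] at h1
      omega
    have hcard𝒜 : 𝒜.card = 𝓕.card := by
      apply Finset.card_image_of_injOn
      intro A hA B hB h
      exact hinj A (hsub A hA).1 B (hsub B hB).1 h
    have hsized : (𝒜 : Set (Finset (Fin n))).Sized k := by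
      intro A hA
      simp only [h𝒜, Finset.coe_image, Set.mem_image, Finset.mem_coe] at hA
      obtain ⟨F, hF, rfl⟩ := hA
      rw [Finset.card_image_of_injOn (hinjF F (hsub F hF).1), (hsub F hF).2]
    have hinter : (𝒜 : Set (Finset (Fin n))).Intersecting := by
      intro A hA B hB
      simp only [h𝒜, Finset.coe_image, Set.mem_image, Finset.mem_coe] at hA hB
      obtain ⟨F, hF, rfl⟩ := hA
      obtain ⟨G, hG, rfl⟩ := hB
      obtain ⟨x, hx⟩ := hint F hF G hG
      rw [Finset.mem_inter] at hx
      exact Finset.not_disjoint_iff.2 ⟨f x, Finset.mem_image_of_mem f hx.1,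
        Finset.mem_image_of_mem f hx.2⟩
    have h2k : 2 * k ≤ n := by linarith
    have hEKR := Finset.erdos_ko_rado hinter hsized (by omega)
    omega
  · -- there is a disjoint pair
    push_neg at hint
    obtain ⟨A₀, hA₀, B₀, hB₀, hAB⟩ := hint
    have hABd : Disjoint A₀ B₀ := Finset.disjoint_iff_inter_eq_empty.2 hAB
    have hk2 : 2 ≤ k := by
      have h2 := hd A₀ hA₀ A₀ hA₀ B₀ hB₀
      simp only [dd, Finset.inter_self, hAB, Finset.inter_comm B₀ A₀,
        Finset.card_empty] at h2
      rw [(hsub A₀ hA₀).2] at h2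
      omega
    obtain ⟨j, rfl⟩ : ∃ j, k = j + 2 := ⟨k - 2, by omega⟩
    have h8 : 2 ^ 3 ≤ (j + 2) ^ 3 := Nat.pow_le_pow_left (by omega) 3
    have hn2 : 32 ≤ n := by
      have : (2 : ℕ) ^ 3 = 8 := by norm_num
      linarith
    set S : Finset ℕ := A₀ ∪ B₀ with hS
    have hScard : S.card = 2 * (j + 2) := by
      rw [hS, Finset.card_union_of_disjoint hABd, (hsub A₀ hA₀).2, (hsub B₀ hB₀).2]
      ring
    have hSsub : S ⊆ Finset.Icc 1 n :=
      Finset.union_subset (hsub A₀ hA₀).1 (hsub B₀ hB₀).1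
    -- every member meets S in at least 2 points
    have hmeet : ∀ C ∈ 𝓕, 2 ≤ (C ∩ S).card := by
      intro C hC
      have h2 := hd A₀ hA₀ C hC B₀ hB₀
      simp only [dd, Finset.inter_comm B₀ A₀, hAB, Finset.card_empty] at h2
      have hCS : C ∩ S = (C ∩ A₀) ∪ (C ∩ B₀) := by
        rw [hS, Finset.inter_union_distrib_left]
      rw [hCS, Finset.card_union_of_disjoint (hABd.mono Finset.inter_subset_right
        Finset.inter_subset_right)]
      rw [Finset.inter_comm A₀ C] at h2
      omega
    have hsubset : 𝓕 ⊆ (S.powersetCard 2).biUnion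
        (fun P => ((Finset.Icc 1 n).powersetCard (j + 2)).filter (fun C => P ⊆ C)) := by
      intro C hC
      obtain ⟨P, hPsub, hP2⟩ := Finset.exists_subset_card_eq (hmeet C hC)
      rw [Finset.mem_biUnion]
      exact ⟨P, Finset.mem_powersetCard.2 ⟨hPsub.trans Finset.inter_subset_right, hP2⟩,
        Finset.mem_filter.2 ⟨h𝓕 hC, hPsub.trans Finset.inter_subset_left⟩⟩
    set c := (n - 2).choose j with hc
    have hbound : 𝓕.card ≤ (2 * (j + 2)).choose 2 * c := by
      calc 𝓕.card ≤ _ := Finset.card_le_card hsubset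
        _ ≤ ∑ P ∈ S.powersetCard 2,
            (((Finset.Icc 1 n).powersetCard (j + 2)).filter (fun C => P ⊆ C)).card :=
          Finset.card_biUnion_le
        _ ≤ ∑ _P ∈ S.powersetCard 2, c := by
          apply Finset.sum_le_sum
          intro P hP
          rw [Finset.mem_powersetCard] at hP
          rw [count_supersets _ _ _ (hP.1.trans hSsub) (by omega), hP.2,
            Nat.card_Icc, hc]
          have e1 : n + 1 - 1 - 2 = n - 2 := by omega
          have e2 : j + 2 - 2 = j := by omega
          rw [e1, e2]
        _ = (2 * (j + 2)).choose 2 * c := by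
          rw [Finset.sum_const, Finset.card_powersetCard, hScard, smul_eq_mul]
    have hch2 : (2 * (j + 2)).choose 2 = (j + 2) * (2 * j + 3) := by
      rw [Nat.choose_two_right]
      have h1 : 2 * (j + 2) - 1 = 2 * j + 3 := by omega
      rw [h1]
      have h2 : 2 * (j + 2) * (2 * j + 3) = 2 * ((j + 2) * (2 * j + 3)) := by ring
      rw [h2, Nat.mul_div_cancel_left _ (by norm_num)]
    have hiter : (n - 1) * c = (n - 1).choose (j + 1) * (j + 1) := by
      have h1 : n - 1 = (n - 2) + 1 := by omega
      rw [h1, hc]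
      exact Nat.add_one_mul_choose_eq (n - 2) j
    have hkey : (j + 2) * (2 * j + 3) * (j + 1) ≤ n - 1 := by
      have hpoly : (j + 2) * (2 * j + 3) * (j + 1) + 1 ≤ 4 * (j + 2) ^ 3 := by
        nlinarith [sq_nonneg j, Nat.zero_le j]
      omega
    have hmul : (j + 2) * (2 * j + 3) * c * (j + 1)
        ≤ (n - 1).choose (j + 1) * (j + 1) := by
      calc (j + 2) * (2 * j + 3) * c * (j + 1)
          = ((j + 2) * (2 * j + 3) * (j + 1)) * c := by ring
        _ ≤ (n - 1) * c := Nat.mul_le_mul_right c hkey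
        _ = _ := hiter
    have hfin : (j + 2) * (2 * j + 3) * c ≤ (n - 1).choose (j + 1) :=
      Nat.le_of_mul_le_mul_right hmul (by omega)
    have hgoal : j + 2 - 1 = j + 1 := by omega
    rw [hch2] at hbound
    rw [hgoal]
    exact hbound.trans hfin
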